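/- Let μ = ⊗_{n∈ℕ} gaussianReal 0 1 be the countable product of standard Gaussian measures on ℝ^ℕ, and let a : ℕ → ℝ. Define H_a = {x ∈ ℝ^ℕ : ∑_n a_n² x_n² < ∞} (i.e., the set of x for which n ↦ a_n² x_n² is Summable). Then μ(H_a) = 1 if ∑_n a_n² < ∞, and μ(H_a) = 0 if ∑_n a_n² = ∞. -/

import Mathlib

open MeasureTheory ProbabilityTheory
open scoped ENNReal NNReal

private lemma gauss_exp_lintegral {c : ℝ} (hc : -(1/2 : ℝ) < c) :
    ∫⁻ t, ENNReal.ofReal (Real.exp (-c * t ^ 2)) ∂(gaussianReal 0 1)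
      = ENNReal.ofReal (Real.sqrt (1 + 2 * c))⁻¹ := by
  have hd : (0:ℝ) < c + 1/2 := by linarith
  rw [gaussianReal_of_var_ne_zero 0 one_ne_zero,
    lintegral_withDensity_eq_lintegral_mul _ (measurable_gaussianPDF 0 1) (by fun_prop)]
  have hpdf : ∀ t : ℝ, gaussianPDF 0 1 t * ENNReal.ofReal (Real.exp (-c * t ^ 2))
      = ENNReal.ofReal ((Real.sqrt (2 * Real.pi))⁻¹ * Real.exp (-(c + 1/2) * t ^ 2)) := by
    intro t
    rw [gaussianPDF, ← ENNReal.ofReal_mul (gaussianPDFReal_nonneg 0 1 t)]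
    congr 1
    simp only [gaussianPDFReal, NNReal.coe_one, mul_one, sub_zero]
    rw [mul_assoc, ← Real.exp_add]
    ring_nf
  simp only [Pi.mul_apply, hpdf]
  have hint : Integrable (fun t : ℝ =>
      (Real.sqrt (2 * Real.pi))⁻¹ * Real.exp (-(c + 1/2) * t ^ 2)) :=
    (integrable_exp_neg_mul_sq hd).const_mul _
  rw [← ofReal_integral_eq_lintegral_ofReal hint
    (Filter.Eventually.of_forall fun t => by positivity)]
  rw [integral_const_mul, integral_gaussian]
  congr 1
  have h1 : (1 : ℝ) + 2 * c = 2 * (c + 1/2) := by ring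
  rw [h1, Real.sqrt_mul (by norm_num), Real.sqrt_mul (by norm_num),
    Real.sqrt_div Real.pi_nonneg]
  have hπ : (0:ℝ) < Real.sqrt Real.pi := Real.sqrt_pos.2 Real.pi_pos
  rw [mul_inv, mul_inv, div_eq_mul_inv]
  rw [show (Real.sqrt 2)⁻¹ * (Real.sqrt Real.pi)⁻¹ *
      (Real.sqrt Real.pi * (Real.sqrt (c+1/2))⁻¹)
      = ((Real.sqrt Real.pi)⁻¹ * Real.sqrt Real.pi) *
        ((Real.sqrt 2)⁻¹ * (Real.sqrt (c+1/2))⁻¹) by ring,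
    inv_mul_cancel₀ hπ.ne', one_mul]

private lemma lintegral_pi_prod : ∀ (n : ℕ) (f : Fin n → ℝ → ℝ≥0∞), (∀ i, Measurable (f i)) →
    ∫⁻ x : Fin n → ℝ, ∏ i, f i (x i) ∂(Measure.pi fun _ => gaussianReal 0 1)
      = ∏ i, ∫⁻ t, f i t ∂(gaussianReal 0 1) := by
  intro n
  induction n with
  | zero => intro f hf; simp
  | succ n ih =>
    intro f hf
    have hmp := (measurePreserving_piFinSuccAbove
      (fun _ : Fin (n+1) => gaussianReal 0 1) 0).symm
    rw [← hmp.lintegral_comp_emb (MeasurableEquiv.measurableEmbedding _)]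
    simp only [MeasurableEquiv.piFinSuccAbove_symm_apply, Fin.insertNthEquiv,
      Equiv.coe_fn_mk, Fin.insertNth_zero, Fin.prod_univ_succ, Fin.zero_succAbove, cast_eq,
      Fin.cons_zero, Fin.cons_succ]
    rw [lintegral_prod_mul (f := f 0) (g := fun b : Fin n → ℝ => ∏ i, f i.succ (b i))
      (hf 0).aemeasurable
      (Finset.measurable_prod _ fun i _ => (hf i.succ).comp (measurable_pi_apply i)).aemeasurable]
    rw [ih (fun i => f i.succ) (fun i => hf i.succ)]

private lemma pi_map_eval {n : ℕ} (j : Fin n) :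
    (Measure.pi fun _ : Fin n => gaussianReal 0 1).map (fun y => y j) = gaussianReal 0 1 := by
  refine Measure.ext fun s hs => ?_
  rw [Measure.map_apply (measurable_pi_apply j) hs, Set.eval_preimage, Measure.pi_pi]
  rw [Finset.prod_eq_single j (fun i _ hij => by simp [Function.update_of_ne hij])
    (fun h => absurd (Finset.mem_univ j) h)]
  simp

private lemma summable_iff_tsum_ofReal_ne_top {f : ℕ → ℝ} (hf : ∀ n, 0 ≤ f n) :
    Summable f ↔ (∑' n, ENNReal.ofReal (f n)) ≠ ∞ := by
  rw [show f = fun n => (((f n).toNNReal : ℝ≥0) : ℝ) from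
    funext fun n => (Real.coe_toNNReal _ (hf n)).symm]
  simp only [ENNReal.ofReal, Real.toNNReal_coe]
  exact ENNReal.tsum_coe_ne_top_iff_summable_coe.symm

private lemma sqrt_prod (g : ℕ → ℝ) (hg : ∀ i, 0 ≤ g i) (N : ℕ) :
    Real.sqrt (∏ i ∈ Finset.range N, g i) = ∏ i ∈ Finset.range N, Real.sqrt (g i) := by
  induction N with
  | zero => simp
  | succ N ih =>
    rw [Finset.prod_range_succ, Finset.prod_range_succ, ← ih,
      Real.sqrt_mul (Finset.prod_nonneg fun i _ => hg i)]

private lemma one_add_sum_le_prod (g : ℕ → ℝ) (hg : ∀ i, 0 ≤ g i) (N : ℕ) :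
    1 + ∑ i ∈ Finset.range N, g i ≤ ∏ i ∈ Finset.range N, (1 + g i) := by
  induction N with
  | zero => simp
  | succ N ih =>
    rw [Finset.prod_range_succ, Finset.sum_range_succ]
    have hP : (1:ℝ) ≤ ∏ i ∈ Finset.range N, (1 + g i) :=
      le_trans (by linarith [Finset.sum_nonneg fun i (_ : i ∈ Finset.range N) => hg i]) ih
    nlinarith [hg N]

/-- **Yamasaki's dichotomy for the product standard Gaussian measure.**
Let `μ = ⊗ₙ gaussianReal 0 1` be the countable product of standard Gaussian
measures on `ℝ^ℕ` — the probability measure whose finite-dimensional marginals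
are finite products of standard Gaussians — and let `a : ℕ → ℝ`.  For
`H_a = {x | ∑ₙ aₙ² xₙ² < ∞}`: if `∑ₙ aₙ² < ∞` then `μ H_a = 1`, and if
`∑ₙ aₙ² = ∞` then `μ H_a = 0`. -/
theorem product_gaussian_ellipsoid_dichotomy
    (a : ℕ → ℝ) (μ : Measure (ℕ → ℝ)) [IsProbabilityMeasure μ]
    (hμ : ∀ n : ℕ, μ.map (fun x (i : Fin n) => x i)
        = Measure.pi (fun _ : Fin n => gaussianReal 0 1)) :
    (Summable (fun n => a n ^ 2) →
      μ {x : ℕ → ℝ | Summable (fun n => a n ^ 2 * x n ^ 2)} = 1) ∧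
    (¬ Summable (fun n => a n ^ 2) →
      μ {x : ℕ → ℝ | Summable (fun n => a n ^ 2 * x n ^ 2)} = 0) := by
  set γ := gaussianReal 0 1 with hγ
  -- each coordinate is standard gaussian
  have map_eval : ∀ n : ℕ, μ.map (fun x => x n) = γ := by
    intro n
    have hcomp : (fun x : ℕ → ℝ => x n)
        = (fun y : Fin (n+1) → ℝ => y ⟨n, n.lt_succ_self⟩) ∘ (fun x (i : Fin (n+1)) => x i) :=
      rfl
    rw [hcomp, ← Measure.map_map (measurable_pi_apply (⟨n, n.lt_succ_self⟩ : Fin (n+1)))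
      (measurable_pi_lambda (fun (x : ℕ → ℝ) (i : Fin (n+1)) => x i)
        fun i => measurable_pi_apply _), hμ (n+1),
      pi_map_eval (⟨n, n.lt_succ_self⟩ : Fin (n+1))]
  set T : (ℕ → ℝ) → ℝ≥0∞ := fun x => ∑' n, ENNReal.ofReal (a n ^ 2 * x n ^ 2) with hTdef
  have hT : Measurable T := by
    apply Measurable.ennreal_tsum
    intro n
    fun_prop
  have hset : {x : ℕ → ℝ | Summable (fun n => a n ^ 2 * x n ^ 2)} = {x | T x ≠ ∞} :=
    Set.ext fun x => summable_iff_tsum_ofReal_ne_top fun n => by positivity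
  have hsmeas : MeasurableSet {x : ℕ → ℝ | T x ≠ ∞} :=
    (hT (measurableSet_singleton ∞)).compl
  constructor
  · -- summable case
    intro hsum
    -- second moment finiteness
    have hM : ∫⁻ t, ENNReal.ofReal (t ^ 2) ∂γ < ∞ := by
      have hb : ∀ t : ℝ, ENNReal.ofReal (t ^ 2)
          ≤ ENNReal.ofReal (4 * Real.exp (-(-(4:ℝ)⁻¹) * t ^ 2)) := by
        intro t
        apply ENNReal.ofReal_le_ofReal
        have e : -(-(4:ℝ)⁻¹) * t ^ 2 = 4⁻¹ * t ^ 2 := by ring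
        rw [e]
        nlinarith [Real.add_one_le_exp (4⁻¹ * t ^ 2)]
      calc ∫⁻ t, ENNReal.ofReal (t ^ 2) ∂γ
          ≤ ∫⁻ t, ENNReal.ofReal (4 * Real.exp (-(-(4:ℝ)⁻¹) * t ^ 2)) ∂γ :=
            lintegral_mono hb
        _ = ENNReal.ofReal 4 * ∫⁻ t, ENNReal.ofReal (Real.exp (-(-(4:ℝ)⁻¹) * t ^ 2)) ∂γ := by
            simp_rw [ENNReal.ofReal_mul (by norm_num : (0:ℝ) ≤ 4)]
            rw [lintegral_const_mul _ (by fun_prop)]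
        _ < ∞ := by
            rw [gauss_exp_lintegral (by norm_num)]
            exact ENNReal.mul_lt_top ENNReal.ofReal_lt_top ENNReal.ofReal_lt_top
    have key : ∫⁻ x, T x ∂μ < ∞ := by
      rw [hTdef]
      rw [lintegral_tsum fun n => (by fun_prop :
        Measurable fun x : ℕ → ℝ => ENNReal.ofReal (a n ^ 2 * x n ^ 2)).aemeasurable]
      have each : ∀ n : ℕ, ∫⁻ x, ENNReal.ofReal (a n ^ 2 * x n ^ 2) ∂μ
          = ENNReal.ofReal (a n ^ 2) * ∫⁻ t, ENNReal.ofReal (t ^ 2) ∂γ := by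
        intro n
        have := lintegral_map (μ := μ) (g := fun x : ℕ → ℝ => x n)
          (f := fun t : ℝ => ENNReal.ofReal (a n ^ 2 * t ^ 2)) (by fun_prop)
          (measurable_pi_apply n)
        rw [map_eval n] at this
        rw [← this]
        simp_rw [ENNReal.ofReal_mul (sq_nonneg (a n))]
        rw [lintegral_const_mul _ (by fun_prop)]
      simp_rw [each]
      rw [ENNReal.tsum_mul_right]
      refine ENNReal.mul_lt_top ?_ hM
      rw [lt_top_iff_ne_top]
      exact (summable_iff_tsum_ofReal_ne_top fun n => sq_nonneg (a n)).1 hsum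
    have hae : ∀ᵐ x ∂μ, T x ≠ ∞ := (ae_lt_top hT key.ne).mono fun x h => h.ne
    rw [hset]
    rw [show {x : ℕ → ℝ | T x ≠ ∞} = {x : ℕ → ℝ | T x = ∞}ᶜ from rfl]
    have hEq : MeasurableSet {x : ℕ → ℝ | T x = ∞} := hT (measurableSet_singleton ∞)
    rw [measure_compl hEq (measure_ne_top μ _), measure_univ]
    have h0 : μ {x : ℕ → ℝ | ¬ T x ≠ ∞} = 0 := ae_iff.1 hae
    simp only [not_not] at h0
    rw [h0, tsub_zero]
  · -- non-summable case
    intro hns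
    set f : (ℕ → ℝ) → ℝ≥0∞ :=
      Set.indicator {x | T x ≠ ∞} (fun x => ENNReal.ofReal (Real.exp (-(T x).toReal))) with hfdef
    have hfmeas : Measurable f :=
      (hT.ennreal_toReal.neg.exp.ennreal_ofReal).indicator hsmeas
    set v : ℕ → ℝ≥0∞ := fun i => ENNReal.ofReal (Real.sqrt (1 + 2 * a i ^ 2))⁻¹ with hvdef
    -- claim 1: the integral of f is at most the partial products
    have claim1 : ∀ N : ℕ, ∫⁻ x, f x ∂μ ≤ ∏ i : Fin N, v i := by
      intro N
      have step1 : ∫⁻ x, f x ∂μ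
          ≤ ∫⁻ x, ∏ i : Fin N,
              ENNReal.ofReal (Real.exp (-(a (i:ℕ)) ^ 2 * (x (i:ℕ)) ^ 2)) ∂μ := by
        refine lintegral_mono fun x => ?_
        dsimp only
        rw [hfdef]
        by_cases hx : x ∈ {x : ℕ → ℝ | T x ≠ ∞}
        · rw [Set.indicator_of_mem hx]
          rw [← ENNReal.ofReal_prod_of_nonneg (fun i _ => (Real.exp_pos _).le)]
          apply ENNReal.ofReal_le_ofReal
          rw [← Real.exp_sum]
          apply Real.exp_le_exp.2
          have h2 : ∑ i : Fin N, ENNReal.ofReal (a (i:ℕ) ^ 2 * x (i:ℕ) ^ 2) ≤ T x := by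
            rw [Fin.sum_univ_eq_sum_range (fun i => ENNReal.ofReal (a i ^ 2 * x i ^ 2))]
            exact ENNReal.sum_le_tsum (Finset.range N)
          have h1 : ENNReal.ofReal (∑ i : Fin N, a (i:ℕ) ^ 2 * x (i:ℕ) ^ 2)
              = ∑ i : Fin N, ENNReal.ofReal (a (i:ℕ) ^ 2 * x (i:ℕ) ^ 2) :=
            ENNReal.ofReal_sum_of_nonneg fun i _ => by positivity
          have h3 : ∑ i : Fin N, a (i:ℕ) ^ 2 * x (i:ℕ) ^ 2 ≤ (T x).toReal := by
            have h4 := ENNReal.toReal_mono hx (h1 ▸ h2)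
            rwa [ENNReal.toReal_ofReal (Finset.sum_nonneg fun i _ => by positivity)] at h4
          have : ∑ i : Fin N, -(a (i:ℕ) ^ 2 * (x (i:ℕ)) ^ 2)
              = -(∑ i : Fin N, a (i:ℕ) ^ 2 * x (i:ℕ) ^ 2) := by
            rw [Finset.sum_neg_distrib]
          simp_rw [neg_mul]
          calc -(T x).toReal ≤ -(∑ i : Fin N, a (i:ℕ) ^ 2 * x (i:ℕ) ^ 2) := by linarith
            _ = ∑ i : Fin N, -(a (i:ℕ) ^ 2 * (x (i:ℕ)) ^ 2) := this.symm
        · rw [Set.indicator_of_notMem hx]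
          exact zero_le
      refine step1.trans_eq ?_
      have hg : Measurable (fun y : Fin N → ℝ =>
          ∏ i : Fin N, ENNReal.ofReal (Real.exp (-(a (i:ℕ)) ^ 2 * (y i) ^ 2))) :=
        Finset.measurable_prod _ fun i _ => by fun_prop
      have hproj : Measurable (fun x : ℕ → ℝ => fun i : Fin N => x i) :=
        measurable_pi_lambda _ fun i => measurable_pi_apply _
      have hmap := lintegral_map (μ := μ) (g := fun x : ℕ → ℝ => fun i : Fin N => x i)
        (f := fun y : Fin N → ℝ =>
          ∏ i : Fin N, ENNReal.ofReal (Real.exp (-(a (i:ℕ)) ^ 2 * (y i) ^ 2))) hg hproj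
      rw [hμ N] at hmap
      rw [show (∫⁻ x, ∏ i : Fin N,
          ENNReal.ofReal (Real.exp (-(a (i:ℕ)) ^ 2 * (x (i:ℕ)) ^ 2)) ∂μ)
        = ∫⁻ x, (fun y : Fin N → ℝ =>
            ∏ i : Fin N, ENNReal.ofReal (Real.exp (-(a (i:ℕ)) ^ 2 * (y i) ^ 2)))
          ((fun i : Fin N => x i)) ∂μ from rfl, ← hmap]
      rw [hγ, lintegral_pi_prod N
        (fun (i : Fin N) (t : ℝ) => ENNReal.ofReal (Real.exp (-(a (i:ℕ)) ^ 2 * t ^ 2)))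
        (fun i => by fun_prop)]
      refine Finset.prod_congr rfl fun i _ => ?_
      rw [hvdef]
      exact gauss_exp_lintegral (by linarith [sq_nonneg (a (i:ℕ))])
    -- claim 3: the partial products tend to 0
    have claim3 : Filter.Tendsto (fun N => ∏ i : Fin N, v i) Filter.atTop (nhds 0) := by
      have hrw : ∀ N : ℕ, ∏ i : Fin N, v i
          = ENNReal.ofReal (Real.sqrt ((∏ i ∈ Finset.range N, (1 + 2 * a i ^ 2))⁻¹)) := by
        intro N
        rw [hvdef]
        rw [Fin.prod_univ_eq_prod_range (fun i => ENNReal.ofReal (Real.sqrt (1 + 2 * a i ^ 2))⁻¹)]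
        rw [← ENNReal.ofReal_prod_of_nonneg
          (fun i _ => inv_nonneg.2 (Real.sqrt_nonneg _))]
        congr 1
        rw [Real.sqrt_inv, sqrt_prod _ (fun i => by positivity), ← Finset.prod_inv_distrib]
      simp_rw [hrw]
      have hP : Filter.Tendsto (fun N => ∏ i ∈ Finset.range N, (1 + 2 * a i ^ 2))
          Filter.atTop Filter.atTop := by
        have hns2 : ¬ Summable (fun n => 2 * a n ^ 2) := by
          intro h
          apply hns
          have := h.div_const 2
          simpa [mul_div_assoc, mul_div_cancel_left₀] using this
        have hS := (not_summable_iff_tendsto_nat_atTop_of_nonneg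
          (fun n => by positivity : ∀ n, (0:ℝ) ≤ 2 * a n ^ 2)).1 hns2
        apply Filter.tendsto_atTop_mono _ hS
        intro N
        have := one_add_sum_le_prod (fun i => 2 * a i ^ 2) (fun i => by positivity) N
        linarith
      have hinv : Filter.Tendsto (fun N => (∏ i ∈ Finset.range N, (1 + 2 * a i ^ 2))⁻¹)
          Filter.atTop (nhds 0) := tendsto_inv_atTop_zero.comp hP
      have hsq : Filter.Tendsto
          (fun N => Real.sqrt ((∏ i ∈ Finset.range N, (1 + 2 * a i ^ 2))⁻¹))
          Filter.atTop (nhds 0) := by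
        have h := (Real.continuous_sqrt.tendsto 0).comp hinv
        simp only [Function.comp_def, Real.sqrt_zero] at h
        exact h
      have h := (ENNReal.continuous_ofReal.tendsto 0).comp hsq
      simp only [Function.comp_def, ENNReal.ofReal_zero] at h
      exact h
    have hint0 : ∫⁻ x, f x ∂μ = 0 :=
      le_antisymm (ge_of_tendsto' claim3 claim1) zero_le
    have hae0 : ∀ᵐ x ∂μ, f x = 0 := (lintegral_eq_zero_iff hfmeas).1 hint0
    have hnm : ∀ᵐ x ∂μ, x ∉ {x : ℕ → ℝ | T x ≠ ∞} := by
      filter_upwards [hae0] with x hx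
      intro hmem
      rw [hfdef] at hx
      rw [Set.indicator_of_mem (show x ∈ {x : ℕ → ℝ | T x ≠ ∞} from hmem)] at hx
      exact absurd hx (ENNReal.ofReal_pos.2 (Real.exp_pos _)).ne'
    rw [hset]
    exact measure_eq_zero_iff_ae_notMem.2 hnm
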